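/- arXiv:1701.07172 — 4 statements merged into one kernel-verified Lean document; each statement's English description precedes it below -/
import Mathlib

section
/- Let Γ be a group, let ζ ∈ Γ be an element of finite order d, and let n be a positive natural number with d < n². Then for every x ∈ Γ, x lies in the cyclic subgroup generated by ζ if and only if there exist natural numbers a ≤ n and b ≤ n such that ζ^b * x = (ζ^n)^a. -/
theorem bsgs_membership_criterion
    {Γ : Type*} [Group Γ] (ζ : Γ) (d n : ℕ)
    (hd : orderOf ζ = d) (hd0 : 0 < d) (hn : 0 < n) (hdn : d < n ^ 2) :
    ∀ x : Γ, x ∈ Subgroup.zpowers ζ ↔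
      ∃ a b : ℕ, a ≤ n ∧ b ≤ n ∧ ζ ^ b * x = (ζ ^ n) ^ a := by
  intro x
  constructor
  · intro hx
    obtain ⟨k, hk⟩ := hx
    obtain ⟨m, hmd, hxm⟩ : ∃ m : ℕ, m < d ∧ ζ ^ m = x := by
      refine ⟨(k % (d : ℤ)).toNat, ?_, ?_⟩
      · have hdpos : (0 : ℤ) < d := by exact_mod_cast hd0
        have h2 := Int.emod_lt_of_pos k hdpos
        have h3 := Int.emod_nonneg k (ne_of_gt hdpos)
        omega
      · have hm' : (((k % (d : ℤ)).toNat : ℤ)) = k % (d : ℤ) :=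
          Int.toNat_of_nonneg (Int.emod_nonneg k (by exact_mod_cast hd0.ne'))
        rw [← hk, ← zpow_natCast, hm', ← hd]
        exact zpow_mod_orderOf ζ k
    have hmn2 : m < n * n := by
      have : n ^ 2 = n * n := sq n
      omega
    refine ⟨m / n + 1, n - m % n, ?_, ?_, ?_⟩
    · have h1 : m / n < n := Nat.div_lt_of_lt_mul hmn2
      omega
    · omega
    · have hr : m % n < n := Nat.mod_lt m hn
      have he : n - m % n + m = n * (m / n + 1) := by
        have hq := Nat.div_add_mod m n
        have hr : m % n < n := Nat.mod_lt m hn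
        rw [Nat.mul_add, Nat.mul_one]
        omega
      rw [← hxm, ← pow_add, he, pow_mul]
  · rintro ⟨a, b, _, _, hab⟩
    have hx : x = (ζ ^ b)⁻¹ * (ζ ^ n) ^ a := by
      rw [← hab]; group
    rw [hx]
    exact mul_mem (inv_mem (pow_mem (Subgroup.mem_zpowers ζ) b))
      (pow_mem (pow_mem (Subgroup.mem_zpowers ζ) n) a)
end

section
/- Let G be an additive group and let P be an element of G whose additive order is a prime p. Let x be a unit of ZMod p and set Q = ((x : ZMod p)).val • P. Let ζ be a unit of ZMod p of multiplicative order d, and let n be a positive natural number with d < n². Then x lies in the cyclic subgroup of (ZMod p)ˣ generated by ζ if and only if there exist natural numbers a ≤ n and b ≤ n such that ((ζ^b : (ZMod p)ˣ) : ZMod p).val • Q = (((ζ^n)^a : (ZMod p)ˣ) : ZMod p).val • P in G. -/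
theorem bsgs_implicit_membership_criterion
    {G : Type*} [AddGroup G] (P : G) (p : ℕ) (hp : p.Prime)
    (hP : addOrderOf P = p)
    (x : (ZMod p)ˣ) (Q : G) (hQ : Q = ((x : ZMod p)).val • P)
    (ζ : (ZMod p)ˣ) (d n : ℕ) (hd : orderOf ζ = d)
    (hn : 0 < n) (hdn : d < n ^ 2) :
    x ∈ Subgroup.zpowers ζ ↔
      ∃ a b : ℕ, a ≤ n ∧ b ≤ n ∧
        ((ζ ^ b : (ZMod p)ˣ) : ZMod p).val • Q =
          (((ζ ^ n) ^ a : (ZMod p)ˣ) : ZMod p).val • P := by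
  haveI : Fact p.Prime := ⟨hp⟩
  subst hQ
  -- key equivalence
  have key : ∀ u v : (ZMod p)ˣ, (u : ZMod p).val • P = (v : ZMod p).val • P ↔ u = v := by
    intro u v
    rw [nsmul_eq_nsmul_iff_modEq, hP, ← ZMod.natCast_eq_natCast_iff]
    simp [ZMod.natCast_val, ZMod.cast_id, Units.ext_iff]
  have key2 : ∀ a b : ℕ,
      ((ζ ^ b : (ZMod p)ˣ) : ZMod p).val • (((x : ZMod p)).val • P) =
        (((ζ ^ n) ^ a : (ZMod p)ˣ) : ZMod p).val • P ↔ ζ ^ b * x = (ζ ^ n) ^ a := by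
    intro a b
    rw [← mul_nsmul, ← key (ζ ^ b * x) ((ζ ^ n) ^ a),
      nsmul_eq_nsmul_iff_modEq, nsmul_eq_nsmul_iff_modEq, hP,
      ← ZMod.natCast_eq_natCast_iff, ← ZMod.natCast_eq_natCast_iff]
    push_cast [ZMod.natCast_val, ZMod.cast_id]
    rw [mul_comm]
  have hd0 : 0 < d := hd ▸ orderOf_pos ζ
  constructor
  · rintro ⟨k, hk⟩
    have hk' : ζ ^ k = x := hk
    have h1 : (0 : ℤ) ≤ k % d := Int.emod_nonneg k (by exact_mod_cast hd0.ne')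
    have h2 : k % d < d := Int.emod_lt_of_pos k (by exact_mod_cast hd0)
    set m : ℕ := (k % d).toNat with hm
    have hmd : m < d := by omega
    have hzm : ζ ^ m = ζ ^ k := by
      rw [← zpow_natCast, hm, Int.toNat_of_nonneg h1, ← hd, zpow_mod_orderOf]
    set q := m / n with hq
    set r := m % n with hr
    have hrn : r < n := Nat.mod_lt _ hn
    have hqn : q < n := by
      apply Nat.div_lt_of_lt_mul
      calc m < d := hmd
        _ < n ^ 2 := hdn
        _ = n * n := sq n
    refine ⟨q + 1, n - r, hqn, Nat.sub_le n r, ?_⟩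
    rw [key2, ← hk', ← hzm]
    rw [← zpow_natCast ζ (n - r), ← zpow_natCast ζ m, ← zpow_natCast (ζ ^ n) (q + 1), ← zpow_natCast ζ n,
      ← zpow_mul, ← zpow_add]
    congr 1
    have hmqr : (m : ℤ) = n * q + r := by
      rw [hq, hr]; exact_mod_cast (Nat.div_add_mod m n).symm
    push_cast [Nat.cast_sub hrn.le]
    linarith
  · rintro ⟨a, b, _, _, h⟩
    rw [key2] at h
    have : x = (ζ ^ b)⁻¹ * ((ζ ^ n) ^ a) := by
      rw [← h, inv_mul_cancel_left]
    rw [this]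
    exact mul_mem (inv_mem (pow_mem (Subgroup.mem_zpowers ζ) b))
      (pow_mem (pow_mem (Subgroup.mem_zpowers ζ) n) a)
end

section
/- Let G be an additive group and let P be an element of G whose additive order is a prime p. Let x be a unit of ZMod p and set Q = ((x : ZMod p)).val • P. Let ζ be a unit of ZMod p of multiplicative order d, and let n be a positive natural number with d < n². If natural numbers a ≤ n and b ≤ n satisfy ((ζ^b : (ZMod p)ˣ) : ZMod p).val • Q = (((ζ^n)^a : (ZMod p)ˣ) : ZMod p).val • P in G, then x = ζ^((a : ℤ)·n − b) in (ZMod p)ˣ; in particular the discrete logarithm x is recovered from the collision (a, b). -/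
theorem bsgs_dlog_recovery
    {G : Type*} [AddGroup G] (P : G) (p : ℕ) (hp : p.Prime)
    (hP : addOrderOf P = p)
    (x : (ZMod p)ˣ) (Q : G) (hQ : Q = ((x : ZMod p)).val • P)
    (ζ : (ZMod p)ˣ) (d n : ℕ) (hd : orderOf ζ = d)
    (hn : 0 < n) (hdn : d < n ^ 2)
    (a b : ℕ) (ha : a ≤ n) (hb : b ≤ n)
    (hcoll : ((ζ ^ b : (ZMod p)ˣ) : ZMod p).val • Q =
      (((ζ ^ n) ^ a : (ZMod p)ˣ) : ZMod p).val • P) :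
    x = ζ ^ ((a : ℤ) * n - b) := by
  haveI : Fact p.Prime := ⟨hp⟩
  rw [hQ, ← mul_nsmul] at hcoll
  rw [nsmul_eq_nsmul_iff_modEq, hP] at hcoll
  have hz : (x : ZMod p) * ((ζ ^ b : (ZMod p)ˣ) : ZMod p)
      = (((ζ ^ n) ^ a : (ZMod p)ˣ) : ZMod p) := by
    have := (ZMod.natCast_eq_natCast_iff _ _ _).mpr hcoll
    push_cast at this
    simpa [ZMod.natCast_val, ZMod.cast_id] using this
  have hu : x * ζ ^ b = (ζ ^ n) ^ a := Units.ext hz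
  have hx : x = (ζ ^ n) ^ a * (ζ ^ b)⁻¹ := by
    rw [← hu, mul_inv_cancel_right]
  rw [hx]
  rw [← zpow_natCast ζ n, ← zpow_natCast _ a, ← zpow_natCast ζ b, ← zpow_mul,
    ← zpow_neg, ← zpow_add, mul_comm (n : ℤ)]
  ring_nf
end

section
/- Let p be a prime, let H be a subgroup of (ZMod p)ˣ of cardinality d, let x ∈ (ZMod p)ˣ, and let m be a natural number. Then, over the real numbers, (card {f : Fin m → (ZMod p)ˣ | ∃ i, f i * x ∈ H} : ℝ) / (p − 1)^m ≥ 1 − exp(−(d·m)/(p − 1)). -/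
open Classical in
lemma count_aux (p : ℕ) (hp : p.Prime) (H : Subgroup (ZMod p)ˣ) (x : (ZMod p)ˣ) (m : ℕ) :
    Nat.card {f : Fin m → (ZMod p)ˣ // ∃ i, f i * x ∈ H} =
      (p - 1) ^ m - (p - 1 - Nat.card H) ^ m := by
  haveI : Fact p.Prime := ⟨hp⟩
  haveI := Classical.decPred (fun y : (ZMod p)ˣ => y * x ∈ H)
  -- card of the "bad" single-coordinate set
  have e1 : {y : (ZMod p)ˣ // y * x ∈ H} ≃ H :=
    { toFun := fun y => ⟨y.1 * x, y.2⟩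
      invFun := fun h => ⟨h.1 * x⁻¹, by simpa using h.2⟩
      left_inv := fun y => by ext; simp
      right_inv := fun h => by ext; simp }
  have hcard1 : Fintype.card {y : (ZMod p)ˣ // y * x ∈ H} = Nat.card H := by
    rw [← Nat.card_eq_fintype_card]; exact Nat.card_congr e1
  have hcardG : Fintype.card (ZMod p)ˣ = p - 1 := ZMod.card_units p
  have hcard2 : Fintype.card {y : (ZMod p)ˣ // ¬ y * x ∈ H} = p - 1 - Nat.card H := by
    rw [Fintype.card_subtype_compl, hcard1, hcardG]
  have e2 : {f : Fin m → (ZMod p)ˣ // ∀ i, ¬ f i * x ∈ H} ≃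
      (Fin m → {y : (ZMod p)ˣ // ¬ y * x ∈ H}) := Equiv.subtypePiEquivPi (p := fun _ y => ¬ y * x ∈ H)
  have hbad : Fintype.card {f : Fin m → (ZMod p)ˣ // ∀ i, ¬ f i * x ∈ H} =
      (p - 1 - Nat.card H) ^ m := by
    rw [Fintype.card_congr e2, Fintype.card_pi]
    simp [hcard2]
  rw [Nat.card_eq_fintype_card]
  have hcompl : Fintype.card {f : Fin m → (ZMod p)ˣ // ∃ i, f i * x ∈ H} =
      Fintype.card (Fin m → (ZMod p)ˣ) -
        Fintype.card {f : Fin m → (ZMod p)ˣ // ∀ i, ¬ f i * x ∈ H} := by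
    have := Fintype.card_subtype_compl (fun f : Fin m → (ZMod p)ˣ => ∀ i, ¬ f i * x ∈ H)
    simp only [not_forall, not_not] at this
    convert this using 2
  rw [hcompl, hbad, Fintype.card_pi]
  simp [hcardG]

theorem probabilistic_bsgs_success_probability
    (p : ℕ) (hp : p.Prime) (H : Subgroup (ZMod p)ˣ) (d : ℕ)
    (hd : d = Nat.card H) (x : (ZMod p)ˣ) (m : ℕ) :
    (Nat.card {f : Fin m → (ZMod p)ˣ // ∃ i, f i * x ∈ H} : ℝ) /
        ((p : ℝ) - 1) ^ m ≥
      1 - Real.exp (-((d : ℝ) * m) / ((p : ℝ) - 1)) := by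
  haveI : Fact p.Prime := ⟨hp⟩
  rw [count_aux p hp H x m, ← hd]
  set N := p - 1 with hN
  have hp2 : 2 ≤ p := hp.two_le
  have hN1 : 1 ≤ N := by omega
  have hdN : d ≤ N := by
    rw [hd, hN, ← ZMod.card_units p, ← Nat.card_eq_fintype_card]
    exact Nat.card_le_card_of_injective _ H.subtype_injective
  have hcastN : ((p : ℝ) - 1) = (N : ℝ) := by
    rw [hN]; push_cast [Nat.cast_sub (by omega : 1 ≤ p)]; ring
  rw [hcastN]
  have hNpos : (0 : ℝ) < N := by positivity
  have hsub : ((N - d) ^ m : ℕ) ≤ (N ^ m : ℕ) :=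
    Nat.pow_le_pow_left (Nat.sub_le _ _) m
  rw [Nat.cast_sub hsub]
  push_cast [Nat.cast_sub hdN]
  rw [ge_iff_le, sub_div, div_self (by positivity), ← div_pow]
  have key : (((N : ℝ) - d) / N) ^ m ≤ Real.exp (-((d : ℝ) * m) / N) := by
    have h1 : ((N : ℝ) - d) / N ≤ Real.exp (-(d : ℝ) / N) := by
      have := Real.add_one_le_exp (-(d : ℝ) / N)
      have heq : ((N : ℝ) - d) / N = -(d : ℝ) / N + 1 := by field_simp; ring
      rw [heq]; linarith [this]
    have h0 : 0 ≤ ((N : ℝ) - d) / N := by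
      apply div_nonneg _ hNpos.le
      have : (d : ℝ) ≤ N := by exact_mod_cast hdN
      linarith
    calc (((N : ℝ) - d) / N) ^ m ≤ (Real.exp (-(d : ℝ) / N)) ^ m :=
          pow_le_pow_left₀ h0 h1 m
      _ = Real.exp (-((d : ℝ) * m) / N) := by
          rw [← Real.exp_nat_mul]; ring_nf
  linarith
end
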